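/- Let x* be a minimizer of (1/2)xᵀAx − λ eᵀx over x ∈ {0,1}ⁿ for λ ≥ 0, let S be the subgraph induced by x*, and suppose some vertex v of S has degree d_S(v) = λ. Then the subgraph S − v (on eᵀx* − 1 vertices) is a sparsest (eᵀx* − 1)-subgraph of G, i.e., it has m_{eᵀx*−1} edges. -/

import Mathlib

open Matrix BigOperators Finset

theorem stmt_13 {n : ℕ} (A : Matrix (Fin n) (Fin n) ℝ)
    (hsymm : A.IsSymm) (h01 : ∀ i j, A i j = 0 ∨ A i j = 1) (hdiag : ∀ i, A i i = 0)
    (m : ℕ → ℝ)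
    (hm : ∀ ℓ : ℕ, ℓ ≤ n → IsLeast {v : ℝ | ∃ x : Fin n → ℝ,
      (∀ i, x i = 0 ∨ x i = 1) ∧ (∑ i, x i) = (ℓ : ℝ) ∧
      v = (1 / 2) * (x ⬝ᵥ A.mulVec x)} (m ℓ))
    (lam : ℝ) (hlam : 0 ≤ lam)
    (xstar : Fin n → ℝ) (hxstar : ∀ i, xstar i = 0 ∨ xstar i = 1)
    (hmin : ∀ x : Fin n → ℝ, (∀ i, x i = 0 ∨ x i = 1) →
      (1 / 2) * (xstar ⬝ᵥ A.mulVec xstar) - lam * (∑ i, xstar i) ≤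
        (1 / 2) * (x ⬝ᵥ A.mulVec x) - lam * (∑ i, x i))
    (k : ℕ) (hk1 : 1 ≤ k) (hcard : (∑ i, xstar i) = (k : ℝ))
    (v : Fin n) (hv : xstar v = 1) (hdeg : (∑ j, A v j * xstar j) = lam) :
    (1 / 2) * ((Function.update xstar v 0) ⬝ᵥ A.mulVec (Function.update xstar v 0)) =
      m (k - 1) := by
  set y := Function.update xstar v 0 with hy
  have hy01 : ∀ i, y i = 0 ∨ y i = 1 := by
    intro i
    by_cases h : i = v
    · subst h; left; simp [hy]
    · simpa [hy, Function.update_of_ne h] using hxstar i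
  have hsumy : (∑ i, y i) = (k : ℝ) - 1 := by
    rw [hy, Finset.sum_update_of_mem (Finset.mem_univ v)]
    have : ∑ i ∈ Finset.univ \ {v}, xstar i = (∑ i, xstar i) - xstar v := by
      rw [Finset.sum_sdiff_eq_sub (by simp)]
      simp
    rw [this, hcard, hv]; ring
  have hxdecomp : xstar = y + Pi.single v 1 := by
    funext i
    by_cases h : i = v
    · subst h; simp [hy, hv]
    · simp [hy, Function.update_of_ne h, Pi.single_eq_of_ne h]
  have hAsymm : ∀ i j, A i j = A j i := fun i j => by
    have := congrFun (congrFun hsymm i) j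
    simpa [Matrix.transpose_apply] using this.symm
  have hrowy : (∑ j, A v j * y j) = lam := by
    rw [← hdeg]
    apply Finset.sum_congr rfl
    intro j _
    by_cases h : j = v
    · subst h; simp [hdiag]
    · simp [hy, Function.update_of_ne h]
  have hsingle : (Pi.single v 1 : Fin n → ℝ) ⬝ᵥ A.mulVec y = lam := by
    rw [single_dotProduct, one_mul]
    simpa [Matrix.mulVec, dotProduct] using hrowy
  have hsingle' : y ⬝ᵥ A.mulVec (Pi.single v 1 : Fin n → ℝ) = lam := by
    rw [show A.mulVec (Pi.single v (1:ℝ)) = fun i => A i v * 1 by ext i; simp [Matrix.mulVec_single_one]]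
    have : (y ⬝ᵥ fun i => A i v * 1) = ∑ i, A v i * y i := by
      simp only [dotProduct, mul_one]
      exact Finset.sum_congr rfl fun i _ => by rw [hAsymm i v]; ring
    rw [this]
    rw [← hrowy]
  have hee : (Pi.single v 1 : Fin n → ℝ) ⬝ᵥ A.mulVec (Pi.single v 1 : Fin n → ℝ) = 0 := by
    rw [Matrix.mulVec_single, single_dotProduct]
    simp [hdiag]
  have hQ : xstar ⬝ᵥ A.mulVec xstar = y ⬝ᵥ A.mulVec y + 2 * lam := by
    rw [hxdecomp, Matrix.mulVec_add, add_dotProduct, dotProduct_add,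
      dotProduct_add, hsingle, hsingle', hee]
    ring
  -- k ≤ n
  have hkn : (k : ℝ) ≤ (n : ℝ) := by
    rw [← hcard]
    calc (∑ i, xstar i) ≤ ∑ _i : Fin n, (1 : ℝ) := by
          apply Finset.sum_le_sum
          intro i _
          rcases hxstar i with h | h <;> simp [h]
      _ = (n : ℝ) := by simp
  have hk1n : k - 1 ≤ n := by
    have : k ≤ n := by exact_mod_cast hkn
    omega
  have hcast : ((k - 1 : ℕ) : ℝ) = (k : ℝ) - 1 := by
    have := Nat.cast_sub hk1 (R := ℝ)
    simpa using this
  obtain ⟨⟨x0, hx01, hx0sum, hx0val⟩, hlb⟩ := hm (k - 1) hk1n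
  -- upper bound: m (k-1) ≤ value of y
  have h1 : m (k - 1) ≤ (1 / 2) * (y ⬝ᵥ A.mulVec y) :=
    hlb ⟨y, hy01, by rw [hsumy, hcast], rfl⟩
  -- lower bound via minimality of xstar
  have h2 := hmin x0 hx01
  rw [hcard, hx0sum, hcast, hQ] at h2
  rw [← hx0val] at h2
  linarith
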